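/- An R-module E is RD-injective if and only if for every RD-embedding f : A → B of R-modules with card(A), card(B) ≤ κ and every R-homomorphism g : A → E, there is an R-homomorphism h : B → E such that h ∘ f = g. -/

import Mathlib

universe u

/-- `A` is an RD-submodule of its ambient module: for every `r : R`,
`A ∩ r • M = r • A`. -/
def IsRDSubmodule {R : Type*} [Ring R] {M : Type*} [AddCommGroup M] [Module R M]
    (A : Submodule R M) : Prop :=
  ∀ (r : R) (x : M), x ∈ A → (∃ b : M, r • b = x) → ∃ a : M, a ∈ A ∧ r • a = x

/-- An RD-embedding is an injective linear map whose image is an RD-submodule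
of its codomain. -/
def IsRDEmbedding {R : Type*} [Ring R] {M N : Type*} [AddCommGroup M] [Module R M]
    [AddCommGroup N] [Module R N] (f : M →ₗ[R] N) : Prop :=
  Function.Injective f ∧ IsRDSubmodule (LinearMap.range f)

/-- `E` is RD-injective: every homomorphism `g : A → E` extends along every
RD-embedding `f : A → B`. -/
def RDInjective (R : Type u) [Ring R] (E : Type u) [AddCommGroup E] [Module R E] : Prop :=
  ∀ (A B : Type u) [AddCommGroup A] [Module R A] [AddCommGroup B] [Module R B]
    (f : A →ₗ[R] B), IsRDEmbedding f →
    ∀ g : A →ₗ[R] E, ∃ h : B →ₗ[R] E, h.comp f = g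

open Cardinal in
lemma mk_span_le' {R : Type u} [Ring R] {M : Type u} [AddCommGroup M] [Module R M] (s : Set M) :
    #(Submodule.span R s) ≤ max #s (max #R ℵ₀) := by
  classical
  rcases isEmpty_or_nonempty s with he | hne
  · have hs : s = ∅ := Set.isEmpty_coe_sort.1 he
    subst hs
    rw [Submodule.span_empty]
    exact le_trans Cardinal.mk_le_aleph0 (le_max_of_le_right (le_max_right _ _))
  · set ev : List (R × s) → M := fun l => (l.map fun p => (p.1 : R) • (p.2 : M)).sum with hev
    have hmem : ∀ l, ev l ∈ Submodule.span R s := by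
      intro l
      induction l with
      | nil => simpa [ev] using (Submodule.span R s).zero_mem
      | cons a t ih =>
        simp only [ev, List.map_cons, List.sum_cons]
        exact (Submodule.span R s).add_mem
          (Submodule.smul_mem _ _ (Submodule.subset_span a.2.2)) ih
    have hsurj : Function.Surjective
        (fun l => (⟨ev l, hmem l⟩ : Submodule.span R s)) := by
      rintro ⟨x, hx⟩
      have : ∃ l, ev l = x := by
        induction hx using Submodule.span_induction with
        | mem x hxs => exact ⟨[(1, ⟨x, hxs⟩)], by simp [ev]⟩
        | zero => exact ⟨[], by simp [ev]⟩
        | add x y _ _ hx' hy' =>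
          obtain ⟨l1, h1⟩ := hx'; obtain ⟨l2, h2⟩ := hy'
          refine ⟨l1 ++ l2, ?_⟩
          simp only [ev] at h1 h2 ⊢
          rw [List.map_append, List.sum_append, h1, h2]
        | smul r x _ hx' =>
          obtain ⟨l, hl⟩ := hx'
          refine ⟨l.map fun p => (r * p.1, p.2), ?_⟩
          have : ((l.map fun p => (r * p.1, p.2)).map fun p => (p.1 : R) • (p.2 : M))
              = (l.map fun p => (p.1 : R) • (p.2 : M)).map (fun x => r • x) := by
            rw [List.map_map, List.map_map]
            exact List.map_congr_left fun p _ => by simp [mul_smul]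
          simp only [ev] at hl ⊢
          rw [this, ← List.smul_sum, hl]
      obtain ⟨l, hl⟩ := this
      exact ⟨l, Subtype.ext hl⟩
    have h1 : #(Submodule.span R s) ≤ #(List (R × s)) := Cardinal.mk_le_of_surjective hsurj
    have h2 : #(List (R × s)) = max #(R × s) ℵ₀ := Cardinal.mk_list_eq_max_mk_aleph0 _
    set κ' := max #s (max #R ℵ₀) with hκ'
    have hℵ : ℵ₀ ≤ κ' := le_trans (le_max_right _ _) (le_max_right _ _)
    have h3 : #(R × s) ≤ κ' := by
      rw [Cardinal.mk_prod, Cardinal.lift_id, Cardinal.lift_id]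
      calc #R * #s ≤ κ' * κ' := by
            exact mul_le_mul' (le_trans (le_max_left _ _) (le_max_right _ _)) (le_max_left _ _)
        _ = κ' := Cardinal.mul_eq_self hℵ
    rw [h2] at h1
    exact le_trans h1 (max_le h3 hℵ)

open Cardinal in
lemma exists_good_sub {R B : Type u} [Ring R] [AddCommGroup B] [Module R B]
    (C : Submodule R B)
    (hC : ∀ (r : R) (x : B), x ∈ C → (∃ y, r • y = x) → ∃ c, c ∈ C ∧ r • c = x) (b : B) :
    ∃ D : Submodule R B, b ∈ D ∧ #D ≤ max #R ℵ₀ ∧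
      (∀ (r : R) (x : B), x ∈ C → x ∈ D → (∃ d ∈ D, r • d = x) →
        ∃ c, c ∈ C ∧ c ∈ D ∧ r • c = x) ∧
      (∀ (r : R) (x : B), x ∈ D → (∃ y, x - r • y ∈ C) → ∃ d ∈ D, x - r • d ∈ C) := by
  classical
  set κ := max #R (ℵ₀ : Cardinal.{u}) with hκdef
  have hκ : ℵ₀ ≤ κ := le_max_right _ _
  -- witness functions
  let w₁ : R → B → B := fun r x => if h : ∃ c, c ∈ C ∧ r • c = x then h.choose else 0
  have hw₁ : ∀ r x, x ∈ C → (∃ y, r • y = x) → w₁ r x ∈ C ∧ r • w₁ r x = x := by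
    intro r x hx hd
    have h : ∃ c, c ∈ C ∧ r • c = x := hC r x hx hd
    simpa only [w₁, dif_pos h] using h.choose_spec
  let w₂ : R → B → B := fun r x => if h : ∃ y, x - r • y ∈ C then h.choose else 0
  have hw₂ : ∀ r x, (∃ y, x - r • y ∈ C) → x - r • (w₂ r x) ∈ C := by
    intro r x h
    simpa only [w₂, dif_pos h] using h.choose_spec
  let step : Submodule R B → Submodule R B := fun D =>
    Submodule.span R (((D : Set B) ∪ Set.image2 w₁ Set.univ (D : Set B)) ∪
      Set.image2 w₂ Set.univ (D : Set B))
  have hstep_le : ∀ D, D ≤ step D := fun D x hx =>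
    Submodule.subset_span (Or.inl (Or.inl hx))
  let Dn : ℕ → Submodule R B := fun n => step^[n] (Submodule.span R {b})
  have hDsucc : ∀ n, Dn (n + 1) = step (Dn n) := fun n =>
    Function.iterate_succ_apply' step n _
  have hmono : Monotone Dn := monotone_nat_of_le_succ fun n => by
    rw [hDsucc n]; exact hstep_le _
  let a : ℕ →o Submodule R B := ⟨Dn, hmono⟩
  refine ⟨⨆ n, a n, ?_, ?_, ?_, ?_⟩
  · exact le_iSup a 0 (Submodule.mem_span_singleton_self b)
  · -- cardinality
    have hcard : ∀ n, #(Dn n) ≤ κ := by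
      intro n
      induction n with
      | zero =>
        refine le_trans (mk_span_le' _) (max_le ?_ le_rfl)
        exact le_trans (le_of_eq (Cardinal.mk_singleton b)) (le_trans Cardinal.one_le_aleph0 hκ)
      | succ n ih =>
        rw [hDsucc n]
        refine le_trans (mk_span_le' _) (max_le ?_ le_rfl)
        have him : ∀ w : R → B → B, #(Set.image2 w Set.univ (Dn n : Set B)) ≤ κ := by
          intro w
          have hsurj : Function.Surjective (fun p : R × (Dn n) =>
              (⟨w p.1 p.2, Set.mem_image2_of_mem (Set.mem_univ _) p.2.2⟩ :
                Set.image2 w Set.univ (Dn n : Set B))) := by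
            rintro ⟨x, hx⟩
            rw [Set.mem_image2] at hx
            obtain ⟨r, -, d, hd, rfl⟩ := hx
            exact ⟨(r, ⟨d, hd⟩), rfl⟩
          refine le_trans (Cardinal.mk_le_of_surjective hsurj) ?_
          rw [Cardinal.mk_prod, Cardinal.lift_id, Cardinal.lift_id]
          calc #R * #(Dn n) ≤ κ * κ := mul_le_mul' (le_max_left _ _) ih
            _ = κ := Cardinal.mul_eq_self hκ
        set s1 : Set B := (Dn n : Set B)
        set s2 : Set B := Set.image2 w₁ Set.univ (Dn n : Set B)
        set s3 : Set B := Set.image2 w₂ Set.univ (Dn n : Set B)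
        calc #((s1 ∪ s2) ∪ s3 : Set B)
            ≤ #(s1 ∪ s2 : Set B) + #s3 := Cardinal.mk_union_le _ _
          _ ≤ (#s1 + #s2) + #s3 := add_le_add (Cardinal.mk_union_le _ _) le_rfl
          _ ≤ (κ + κ) + κ := add_le_add (add_le_add ih (him w₁)) (him w₂)
          _ = κ := by rw [Cardinal.add_eq_self hκ, Cardinal.add_eq_self hκ]
    have hsurj : Function.Surjective (fun p : Σ n : ULift.{u} ℕ, (Dn n.down) =>
        (⟨p.2.1, le_iSup a p.1.down p.2.2⟩ : (⨆ n, a n : Submodule R B))) := by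
      rintro ⟨x, hx⟩
      obtain ⟨n, hn⟩ := (Submodule.mem_iSup_of_chain a x).1 hx
      exact ⟨⟨⟨n⟩, ⟨x, hn⟩⟩, rfl⟩
    calc #(⨆ n, a n : Submodule R B)
        ≤ #(Σ n : ULift.{u} ℕ, (Dn n.down)) := Cardinal.mk_le_of_surjective hsurj
      _ = Cardinal.sum fun n : ULift.{u} ℕ => #(Dn n.down) := Cardinal.mk_sigma _
      _ ≤ Cardinal.sum fun _ : ULift.{u} ℕ => κ := Cardinal.sum_le_sum _ _ fun n => hcard n.down
      _ = #(ULift.{u} ℕ) * κ := Cardinal.sum_const' _ _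
      _ = κ := by
          rw [Cardinal.mk_denumerable, Cardinal.mul_eq_max le_rfl hκ]
          exact max_eq_right hκ
  · -- property (3)
    intro r x hxC hxD hdiv
    obtain ⟨d, hd, hrd⟩ := hdiv
    obtain ⟨n, hn⟩ := (Submodule.mem_iSup_of_chain a x).1 hxD
    obtain ⟨hc1, hc2⟩ := hw₁ r x hxC ⟨d, hrd⟩
    refine ⟨w₁ r x, hc1, ?_, hc2⟩
    have : w₁ r x ∈ Dn (n + 1) := by
      rw [hDsucc n]
      exact Submodule.subset_span (Or.inl (Or.inr
        (Set.mem_image2_of_mem (Set.mem_univ r) hn)))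
    exact (Submodule.mem_iSup_of_chain a _).2 ⟨n + 1, this⟩
  · -- property (4)
    intro r x hxD hdiv
    obtain ⟨n, hn⟩ := (Submodule.mem_iSup_of_chain a x).1 hxD
    refine ⟨w₂ r x, ?_, hw₂ r x hdiv⟩
    have : w₂ r x ∈ Dn (n + 1) := by
      rw [hDsucc n]
      exact Submodule.subset_span (Or.inr (Set.mem_image2_of_mem (Set.mem_univ r) hn))
    exact (Submodule.mem_iSup_of_chain a _).2 ⟨n + 1, this⟩

theorem stmt9 (R : Type u) [Ring R] (E : Type u) [AddCommGroup E] [Module R E] :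
    RDInjective R E ↔
      ∀ (A B : Type u) [AddCommGroup A] [Module R A] [AddCommGroup B] [Module R B]
        (f : A →ₗ[R] B), IsRDEmbedding f →
        Cardinal.mk A ≤ max (Cardinal.mk R) Cardinal.aleph0 →
        Cardinal.mk B ≤ max (Cardinal.mk R) Cardinal.aleph0 →
        ∀ g : A →ₗ[R] E, ∃ h : B →ₗ[R] E, h.comp f = g := by
  constructor
  · intro h A B _ _ _ _ f hf _ _ g
    exact h A B f hf g
  · intro H A B _ _ _ _ f hf g
    classical
    set A' : Submodule R B := LinearMap.range f with hA'
    let e : A ≃ₗ[R] A' := LinearEquiv.ofInjective f hf.1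
    let g' : A' →ₗ[R] E := g.comp e.symm.toLinearMap
    let p₀ : B →ₗ.[R] E := ⟨A', g'⟩
    set S : Set (B →ₗ.[R] E) :=
      {p | p₀ ≤ p ∧ ∀ (r : R) (x : B), x ∈ p.domain → (∃ y, r • y = x) →
        ∃ c, c ∈ p.domain ∧ r • c = x} with hS
    have hp₀S : p₀ ∈ S := ⟨le_refl _, hf.2⟩
    have hchain : ∀ c ⊆ S, IsChain (· ≤ ·) c → ∀ y ∈ c, ∃ ub ∈ S, ∀ z ∈ c, z ≤ ub := by
      intro c hcS hc y hyc
      have hdir : DirectedOn (· ≤ ·) c := hc.directedOn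
      refine ⟨LinearPMap.sSup c hdir, ⟨?_, ?_⟩, fun z hz => LinearPMap.le_sSup hdir hz⟩
      · exact le_trans (hcS hyc).1 (LinearPMap.le_sSup hdir hyc)
      · intro r x hx hdiv
        have hx' : x ∈ sSup (LinearPMap.domain '' c) := hx
        have hdir' : DirectedOn (· ≤ ·) (LinearPMap.domain '' c) := by
          rintro _ ⟨p1, hp1, rfl⟩ _ ⟨p2, hp2, rfl⟩
          obtain ⟨z, hz, h1, h2⟩ := hdir p1 hp1 p2 hp2
          exact ⟨z.domain, ⟨z, hz, rfl⟩, h1.1, h2.1⟩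
        obtain ⟨Dq, ⟨q, hqc, rfl⟩, hxq⟩ :=
          (Submodule.mem_sSup_of_directed (Set.Nonempty.image _ ⟨y, hyc⟩) hdir').1 hx'
        obtain ⟨c', hc', hrc'⟩ := (hcS hqc).2 r x hxq hdiv
        exact ⟨c', (LinearPMap.le_sSup hdir hqc).1 hc', hrc'⟩
    obtain ⟨p, hp₀p, hpmax⟩ := zorn_le_nonempty₀ S hchain p₀ hp₀S
    have hpS : p ∈ S := hpmax.1
    have hdom : p.domain = ⊤ := by
      by_contra hne
      have hb : ∃ b : B, b ∉ p.domain := by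
        by_contra hall
        push_neg at hall
        exact hne (Submodule.eq_top_iff'.2 hall)
      obtain ⟨b, hbp⟩ := hb
      obtain ⟨D, hbD, hDcard, hD3, hD4⟩ := exists_good_sub p.domain hpS.2 b
      set A₀ : Submodule R B := p.domain ⊓ D with hA₀
      let incl : A₀ →ₗ[R] D := Submodule.inclusion inf_le_right
      have hinj : Function.Injective incl := Submodule.inclusion_injective _
      have hmemrange : ∀ x : D, x ∈ LinearMap.range incl ↔ (x : B) ∈ A₀ := by
        intro x
        rw [Submodule.range_inclusion, Submodule.mem_comap]
        rfl
      have hrd : IsRDSubmodule (LinearMap.range incl) := by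
        intro r x hx hdiv
        have hx0 : (x : B) ∈ A₀ := (hmemrange x).1 hx
        obtain ⟨d, hd⟩ := hdiv
        have hd' : r • (d : B) = (x : B) := by exact_mod_cast congrArg Subtype.val hd
        obtain ⟨c, hcC, hcD, hrc⟩ := hD3 r x hx0.1 x.2 ⟨d.1, d.2, hd'⟩
        exact ⟨⟨c, hcD⟩, (hmemrange _).2 ⟨hcC, hcD⟩, Subtype.ext hrc⟩
      have hcard₀ : Cardinal.mk A₀ ≤ max (Cardinal.mk R) Cardinal.aleph0 :=
        le_trans (Cardinal.mk_le_of_injective hinj) hDcard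
      obtain ⟨k, hk⟩ := H A₀ D incl ⟨hinj, hrd⟩ hcard₀ hDcard
        (p.toFun.comp (Submodule.inclusion inf_le_left))
      let q : B →ₗ.[R] E := ⟨D, k⟩
      have hcompat : ∀ (x : p.domain) (y : q.domain), (x : B) = y → p x = q y := by
        intro x y hxy
        have hx0 : (x : B) ∈ A₀ := ⟨x.2, hxy ▸ y.2⟩
        set z : A₀ := ⟨x, hx0⟩ with hz
        have h2 := LinearMap.congr_fun hk z
        have h3 : incl z = y := Subtype.ext hxy
        have h4 : Submodule.inclusion (inf_le_left : A₀ ≤ p.domain) z = x :=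
          Subtype.ext rfl
        show p.toFun x = k y
        rw [← h3, ← h4]
        exact h2.symm
      let P' := p.sup q hcompat
      have hP'dom : P'.domain = p.domain ⊔ D := LinearPMap.domain_sup p q hcompat
      have hP'S : P' ∈ S := by
        constructor
        · exact le_trans hpS.1 (p.left_le_sup q hcompat)
        · intro r x hx hdiv
          rw [hP'dom] at hx
          obtain ⟨cc, hcc, d, hd, rfl⟩ := Submodule.mem_sup.1 hx
          obtain ⟨y₀, hy₀⟩ := hdiv
          have h4 : ∃ y, d - r • y ∈ p.domain := by
            refine ⟨y₀, ?_⟩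
            have : d - r • y₀ = -cc := by rw [hy₀]; abel
            rw [this]
            exact p.domain.neg_mem hcc
          obtain ⟨d', hd', hcd'⟩ := hD4 r d hd h4
          have h5 : (cc + d) - r • d' ∈ p.domain := by
            have := p.domain.add_mem hcc hcd'
            have heq : cc + (d - r • d') = (cc + d) - r • d' := by abel
            rwa [heq] at this
          have h6 : ∃ y, r • y = (cc + d) - r • d' := by
            refine ⟨y₀ - d', ?_⟩
            rw [smul_sub, hy₀]
          obtain ⟨c', hc', hrc'⟩ := hpS.2 r _ h5 h6
          refine ⟨c' + d', ?_, ?_⟩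
          · rw [hP'dom]
            exact Submodule.add_mem _ (Submodule.mem_sup_left hc') (Submodule.mem_sup_right hd')
          · rw [smul_add, hrc']; abel
      have hle : p ≤ P' := p.left_le_sup q hcompat
      have hP'p := hpmax.2 hP'S hle
      have hbP' : b ∈ P'.domain := by
        rw [hP'dom]
        exact Submodule.mem_sup_right hbD
      exact hbp (hP'p.1 hbP')
    let τ : B →ₗ[R] p.domain :=
      LinearMap.codRestrict p.domain LinearMap.id (fun x => hdom ▸ Submodule.mem_top)
    refine ⟨p.toFun.comp τ, ?_⟩
    ext a
    have hmem : f a ∈ p.domain := hpS.1.1 ⟨a, rfl⟩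
    have h7 := hpS.1.2 (x := ⟨f a, ⟨a, rfl⟩⟩) (y := ⟨f a, hmem⟩) rfl
    have h8 : e.symm ⟨f a, ⟨a, rfl⟩⟩ = a := by
      have he : e a = ⟨f a, ⟨a, rfl⟩⟩ :=
        Subtype.ext (LinearEquiv.ofInjective_apply (f := f) (h := hf.1) a)
      rw [← he, LinearEquiv.symm_apply_apply]
    show p.toFun (τ (f a)) = g a
    have hτ : τ (f a) = ⟨f a, hmem⟩ := rfl
    rw [hτ]
    calc p.toFun ⟨f a, hmem⟩ = p ⟨f a, hmem⟩ := rfl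
      _ = p₀ ⟨f a, ⟨a, rfl⟩⟩ := h7.symm
      _ = g a := by
          show g' ⟨f a, ⟨a, rfl⟩⟩ = g a
          show g (e.symm ⟨f a, ⟨a, rfl⟩⟩) = g a
          rw [h8]
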